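/- Let X be a random variable on {0} ∪ {m ∈ ℤ : m ≥ 2} with Pr(X = m) proportional to [d_i]_m [d_j]_m / (m! M_1^m) for m ≥ 2 and Pr(X = 0) proportional to 1 + d_i d_j/M_1 (d_i, d_j ≤ M_1 positive integers). Then X is stochastically dominated by a Poisson random variable with mean λ = d_i d_j / M_1; in particular E[X] ≤ λ + e^{λ}·λ^2 (and E X = O(λ)). -/

import Mathlib

open Nat

/-- The (unnormalised) weight of the distribution supported on `{0} ∪ {m : m ≥ 2}`:
weight `1 + dᵢdⱼ/M₁` at `0`, weight `0` at `1`, and weight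
`[dᵢ]_m [dⱼ]_m / (m! M₁^m)` at `m ≥ 2`. -/
noncomputable def wfun (di dj M1 : ℕ) : ℕ → ℝ := fun m =>
  if m = 0 then 1 + ((di * dj : ℕ) : ℝ) / (M1 : ℝ)
  else if m = 1 then 0
  else ((di.descFactorial m * dj.descFactorial m : ℕ) : ℝ) / ((m ! : ℝ) * (M1 : ℝ) ^ m)

noncomputable def cf9 (di dj : ℕ) (m : ℕ) : ℝ :=
  ((di.descFactorial m * dj.descFactorial m : ℕ) : ℝ) / ((di * dj : ℕ) : ℝ) ^ m

lemma cf9_nonneg (di dj m : ℕ) : 0 ≤ cf9 di dj m := by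
  unfold cf9; positivity

lemma cf9_zero (di dj : ℕ) : cf9 di dj 0 = 1 := by simp [cf9]

lemma cf9_anti (di dj : ℕ) (h1 : 0 < di) (h2 : 0 < dj) : Antitone (cf9 di dj) := by
  apply antitone_nat_of_succ_le
  intro m
  have hP : (0:ℝ) < ((di * dj : ℕ) : ℝ) := by
    exact_mod_cast Nat.mul_pos h1 h2
  unfold cf9
  rw [Nat.descFactorial_succ, Nat.descFactorial_succ, pow_succ,
    div_le_div_iff₀ (by positivity) (by positivity)]
  push_cast
  have e1 : ((di - m : ℕ) : ℝ) ≤ (di : ℝ) := by exact_mod_cast Nat.sub_le di m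
  have e2 : ((dj - m : ℕ) : ℝ) ≤ (dj : ℝ) := by exact_mod_cast Nat.sub_le dj m
  have n1 : (0:ℝ) ≤ ((di - m : ℕ) : ℝ) := by positivity
  have n2 : (0:ℝ) ≤ ((dj - m : ℕ) : ℝ) := by positivity
  have n3 : (0:ℝ) ≤ (di.descFactorial m : ℝ) := by positivity
  have n4 : (0:ℝ) ≤ (dj.descFactorial m : ℝ) := by positivity
  have n5 : (0:ℝ) ≤ ((di:ℝ) * (dj:ℝ)) ^ m := by positivity
  calc ((di - m : ℕ) : ℝ) * (di.descFactorial m : ℝ) * (((dj - m : ℕ) : ℝ) * (dj.descFactorial m : ℝ)) * ((di:ℝ) * (dj:ℝ)) ^ m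
      = (((di - m : ℕ) : ℝ) * ((dj - m : ℕ) : ℝ)) * ((di.descFactorial m : ℝ) * (dj.descFactorial m : ℝ) * ((di:ℝ) * (dj:ℝ)) ^ m) := by ring
    _ ≤ ((di:ℝ) * (dj:ℝ)) * ((di.descFactorial m : ℝ) * (dj.descFactorial m : ℝ) * ((di:ℝ) * (dj:ℝ)) ^ m) := by
        apply mul_le_mul_of_nonneg_right _ (by positivity)
        exact mul_le_mul e1 e2 n2 (by positivity)
    _ = (di.descFactorial m : ℝ) * (dj.descFactorial m : ℝ) * (((di:ℝ) * (dj:ℝ)) ^ m * ((di:ℝ) * (dj:ℝ))) := by ring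

lemma cf9_le_one (di dj : ℕ) (h1 : 0 < di) (h2 : 0 < dj) (m : ℕ) : cf9 di dj m ≤ 1 := by
  have := cf9_anti di dj h1 h2 (Nat.zero_le m)
  rwa [cf9_zero] at this

lemma tail_shift9 (f : ℕ → ℝ) (hf0 : ∀ m, 0 ≤ f m) (hf : Summable f) (k : ℕ) :
    ∑' m, (if k ≤ m then f m else 0) = ∑' m, f (m + k) := by
  have hg : Summable (fun m => if k ≤ m then f m else 0) :=
    hf.of_nonneg_of_le (fun m => by split <;> simp [hf0 m])
      (fun m => by split <;> simp [hf0 m])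
  have h1 := Summable.sum_add_tsum_nat_add (f := fun m => if k ≤ m then f m else 0) k hg
  have h2 : ∑ i ∈ Finset.range k, (if k ≤ i then f i else 0) = 0 :=
    Finset.sum_eq_zero fun i hi => if_neg (by simp at hi; omega)
  rw [← h1, h2, zero_add]
  exact tsum_congr fun i => if_pos (Nat.le_add_left k i)

/-- The random variable `X` with `Pr(X = m) ∝ [dᵢ]_m[dⱼ]_m/(m! M₁^m)` for `m ≥ 2` and
`Pr(X = 0) ∝ 1 + dᵢdⱼ/M₁` is stochastically dominated by a Poisson variable with mean
`λ = dᵢdⱼ/M₁`; in particular `E[X] ≤ λ + e^λ·λ²`. -/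
theorem stmt_9 (di dj M1 : ℕ) (h1 : 0 < di) (h2 : 0 < dj) (h3 : di ≤ M1) (h4 : dj ≤ M1) :
    (∀ k : ℕ,
        (∑' m : ℕ, if k ≤ m then wfun di dj M1 m else 0) /
            (∑' m : ℕ, wfun di dj M1 m) ≤
          ∑' m : ℕ, if k ≤ m then
            Real.exp (-(((di * dj : ℕ) : ℝ) / (M1 : ℝ))) *
              (((di * dj : ℕ) : ℝ) / (M1 : ℝ)) ^ m / (m ! : ℝ)
          else 0) ∧
      (∑' m : ℕ, (m : ℝ) * wfun di dj M1 m) / (∑' m : ℕ, wfun di dj M1 m) ≤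
        ((di * dj : ℕ) : ℝ) / (M1 : ℝ) +
          Real.exp (((di * dj : ℕ) : ℝ) / (M1 : ℝ)) *
            (((di * dj : ℕ) : ℝ) / (M1 : ℝ)) ^ 2 := by
  have hM : 0 < M1 := lt_of_lt_of_le h1 h3
  set L : ℝ := ((di * dj : ℕ) : ℝ) / (M1 : ℝ) with hLdef
  set w : ℕ → ℝ := wfun di dj M1 with hwdef
  set c : ℕ → ℝ := cf9 di dj with hcdef
  set a : ℕ → ℝ := fun m => L ^ m / (m ! : ℝ) with hadef
  have hL0 : 0 ≤ L := by rw [hLdef]; positivity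
  have hc_nonneg : ∀ m, 0 ≤ c m := cf9_nonneg di dj
  have hc_anti : Antitone c := cf9_anti di dj h1 h2
  have hc_le_one : ∀ m, c m ≤ 1 := cf9_le_one di dj h1 h2
  have ha_nonneg : ∀ m, 0 ≤ a m := fun m => by rw [hadef]; positivity
  have ha_sum : Summable a := Real.summable_pow_div_factorial L
  have ha_tsum : ∑' m, a m = Real.exp L := by
    rw [Real.exp_eq_exp_ℝ, NormedSpace.exp_eq_tsum_div]
  have ha0 : a 0 = 1 := by simp [hadef]
  have ha1 : a 1 = L := by simp [hadef]
  have hw0 : w 0 = 1 + L := by rw [hwdef, hLdef]; simp [wfun]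
  have hw1 : w 1 = 0 := by rw [hwdef]; simp [wfun]
  have hw_eq : ∀ m, 2 ≤ m → w m = c m * a m := by
    intro m hm
    rw [hwdef, hcdef, hadef, hLdef]
    simp only [wfun, cf9]
    rw [if_neg (by omega), if_neg (by omega)]
    have hPm : ((di * dj : ℕ) : ℝ) ^ m ≠ 0 := by
      have : (0:ℝ) < ((di * dj : ℕ) : ℝ) := by exact_mod_cast Nat.mul_pos h1 h2
      positivity
    have hMm : (M1 : ℝ) ^ m ≠ 0 := by positivity
    have hfm : ((m ! : ℕ) : ℝ) ≠ 0 := by positivity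
    rw [div_pow]
    field_simp
  have hw_nonneg : ∀ m, 0 ≤ w m := by
    intro m
    match m, (by omega : m = 0 ∨ m = 1 ∨ 2 ≤ m) with
    | _, Or.inl rfl => rw [hw0]; positivity
    | _, Or.inr (Or.inl rfl) => rw [hw1]
    | m, Or.inr (Or.inr hm) =>
      rw [hw_eq m hm]; exact mul_nonneg (hc_nonneg m) (ha_nonneg m)
  have hw_le : ∀ m, w m ≤ (1 + L) * a m := by
    intro m
    match m, (by omega : m = 0 ∨ m = 1 ∨ 2 ≤ m) with
    | _, Or.inl rfl => rw [hw0, ha0, mul_one]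
    | _, Or.inr (Or.inl rfl) => rw [hw1]; positivity
    | m, Or.inr (Or.inr hm) =>
      rw [hw_eq m hm]
      calc c m * a m ≤ 1 * a m :=
            mul_le_mul_of_nonneg_right (hc_le_one m) (ha_nonneg m)
        _ ≤ (1 + L) * a m := by
            exact mul_le_mul_of_nonneg_right (by linarith) (ha_nonneg m)
  have hw_sum : Summable w :=
    (ha_sum.mul_left (1 + L)).of_nonneg_of_le hw_nonneg hw_le
  set W : ℝ := ∑' m, w m with hWdef
  have hW_ge : 1 + L ≤ W := by
    have := Summable.le_tsum hw_sum 0 fun j _ => hw_nonneg j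
    rwa [hw0] at this
  have hWpos : 0 < W := lt_of_lt_of_le (by linarith) hW_ge
  -- tail sums
  set A : ℕ → ℝ := fun k => ∑' m, (if k ≤ m then a m else 0) with hAdef
  set S : ℕ → ℝ := fun k => ∑' m, (if k ≤ m then w m else 0) with hSdef
  have hA_shift : ∀ k, A k = ∑' m, a (m + k) := fun k => tail_shift9 a ha_nonneg ha_sum k
  have hS_shift : ∀ k, S k = ∑' m, w (m + k) := fun k => tail_shift9 w hw_nonneg hw_sum k
  have hA_nonneg : ∀ k, 0 ≤ A k := fun k =>
    tsum_nonneg fun m => by split <;> simp [ha_nonneg m]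
  have hS_nonneg : ∀ k, 0 ≤ S k := fun k =>
    tsum_nonneg fun m => by split <;> simp [hw_nonneg m]
  have ha_shift_sum : ∀ k, Summable (fun m => a (m + k)) := fun k =>
    (summable_nat_add_iff k).2 ha_sum
  have hw_shift_sum : ∀ k, Summable (fun m => w (m + k)) := fun k =>
    (summable_nat_add_iff k).2 hw_sum
  -- decompositions
  have hWsplit : ∀ k, ∑ i ∈ Finset.range k, w i + S k = W := by
    intro k; rw [hS_shift k]; exact Summable.sum_add_tsum_nat_add k hw_sum
  have hEsplit : ∀ k, ∑ i ∈ Finset.range k, a i + A k = Real.exp L := by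
    intro k; rw [hA_shift k, ← ha_tsum]; exact Summable.sum_add_tsum_nat_add k ha_sum
  -- (i) S k ≤ c k * A k for k ≥ 1
  have h_i : ∀ k, 1 ≤ k → S k ≤ c k * A k := by
    intro k hk
    rw [hS_shift k, hA_shift k, ← tsum_mul_left]
    apply Summable.tsum_le_tsum _ (hw_shift_sum k) ((ha_shift_sum k).mul_left _)
    intro m
    rcases Nat.lt_or_ge (m + k) 2 with h | h
    · have hmk : m + k = 1 := by omega
      rw [hmk, hw1]
      exact mul_nonneg (hc_nonneg k) (ha_nonneg 1)
    · rw [hw_eq _ h]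
      exact mul_le_mul_of_nonneg_right (hc_anti (Nat.le_add_left k m)) (ha_nonneg _)
  -- (ii) partial sums, k ≥ 2
  have h_ii : ∀ k, 2 ≤ k → c k * ∑ i ∈ Finset.range k, a i ≤ ∑ i ∈ Finset.range k, w i := by
    intro k hk
    induction k, hk using Nat.le_induction with
    | base =>
      simp only [Finset.sum_range_succ, Finset.sum_range_zero, zero_add, ha0, ha1, hw0, hw1,
        add_zero]
      nlinarith [hc_le_one 2, hc_nonneg 2, hL0]
    | succ k hk ih =>
      rw [Finset.sum_range_succ, Finset.sum_range_succ, mul_add]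
      have hB_nonneg : 0 ≤ ∑ i ∈ Finset.range k, a i :=
        Finset.sum_nonneg fun i _ => ha_nonneg i
      have t1 : c (k + 1) * ∑ i ∈ Finset.range k, a i ≤ ∑ i ∈ Finset.range k, w i :=
        le_trans (mul_le_mul_of_nonneg_right (hc_anti (Nat.le_succ k)) hB_nonneg) ih
      have t2 : c (k + 1) * a k ≤ w k := by
        rw [hw_eq k hk]
        exact mul_le_mul_of_nonneg_right (hc_anti (Nat.le_succ k)) (ha_nonneg k)
      linarith
  -- RHS simplification
  have hRHS : ∀ k, (∑' m : ℕ, if k ≤ m then Real.exp (-L) * L ^ m / (m ! : ℝ) else 0)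
      = Real.exp (-L) * A k := by
    intro k
    rw [hAdef, ← tsum_mul_left]
    apply tsum_congr
    intro m
    split
    · rw [hadef, mul_div_assoc]
    · rw [mul_zero]
  constructor
  · -- part 1
    intro k
    rw [hRHS k, div_le_iff₀ hWpos]
    show S k ≤ Real.exp (-L) * A k * W
    -- main inequality for k ≥ 2:
    have main : ∀ j, 2 ≤ j → S j ≤ Real.exp (-L) * A j * W := by
      intro j hj
      have hexp : Real.exp (-L) * (∑ i ∈ Finset.range j, a i + A j) = 1 := by
        rw [hEsplit j, ← Real.exp_add]; simp
      set B : ℝ := ∑ i ∈ Finset.range j, a i with hBdef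
      have hB_nonneg : 0 ≤ B := Finset.sum_nonneg fun i _ => ha_nonneg i
      have hi := h_i j (by omega)
      have hii : c j * B + S j ≤ W := by
        have := h_ii j hj
        have := hWsplit j
        linarith
      have hE0 : 0 ≤ Real.exp (-L) := (Real.exp_pos _).le
      calc S j = S j * (Real.exp (-L) * B) + S j * (Real.exp (-L) * A j) := by
            have : S j * (Real.exp (-L) * B) + S j * (Real.exp (-L) * A j)
                = S j * (Real.exp (-L) * (B + A j)) := by ring
            rw [this, hexp, mul_one]
        _ ≤ (c j * A j) * (Real.exp (-L) * B) + S j * (Real.exp (-L) * A j) := by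
            have : 0 ≤ Real.exp (-L) * B := mul_nonneg hE0 hB_nonneg
            nlinarith [mul_le_mul_of_nonneg_right hi this]
        _ = (Real.exp (-L) * A j) * (c j * B + S j) := by ring
        _ ≤ (Real.exp (-L) * A j) * W := by
            exact mul_le_mul_of_nonneg_left hii (mul_nonneg hE0 (hA_nonneg j))
        _ = Real.exp (-L) * A j * W := rfl
    match k, (by omega : k = 0 ∨ k = 1 ∨ 2 ≤ k) with
    | _, Or.inl rfl =>
      have hS0 : S 0 = W := by
        rw [hSdef, hWdef]
        exact tsum_congr fun m => if_pos (Nat.zero_le m)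
      have hA0 : A 0 = Real.exp L := by
        have := hEsplit 0
        simpa using this
      rw [hS0, hA0, ← Real.exp_add]
      simp
    | _, Or.inr (Or.inl rfl) =>
      have hS12 : S 1 = S 2 := by
        rw [hSdef]
        apply tsum_congr
        intro m
        match m, (by omega : m = 0 ∨ m = 1 ∨ 2 ≤ m) with
        | _, Or.inl rfl => simp
        | _, Or.inr (Or.inl rfl) => simp [hw1]
        | m, Or.inr (Or.inr hm) => rw [if_pos (by omega), if_pos (by omega)]
      have hA21 : A 2 ≤ A 1 := by
        rw [hAdef]
        apply Summable.tsum_le_tsum _ _ _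
        · intro m
          split
          · rw [if_pos (by omega)]
          · split
            · exact ha_nonneg m
            · exact le_rfl
        · exact ha_sum.of_nonneg_of_le (fun m => by split <;> simp [ha_nonneg m])
            (fun m => by split <;> simp [ha_nonneg m])
        · exact ha_sum.of_nonneg_of_le (fun m => by split <;> simp [ha_nonneg m])
            (fun m => by split <;> simp [ha_nonneg m])
      calc S 1 = S 2 := hS12
        _ ≤ Real.exp (-L) * A 2 * W := main 2 le_rfl
        _ ≤ Real.exp (-L) * A 1 * W := by
            have hE0 : 0 ≤ Real.exp (-L) := (Real.exp_pos _).le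
            have : Real.exp (-L) * A 2 ≤ Real.exp (-L) * A 1 :=
              mul_le_mul_of_nonneg_left hA21 hE0
            exact mul_le_mul_of_nonneg_right this hWpos.le
    | k, Or.inr (Or.inr hk) => exact main k hk
  · -- part 2
    set u : ℕ → ℝ := fun m => (m : ℝ) * a m with hudef
    have hu1 : ∀ n, u (n + 1) = L * a n := by
      intro n
      rw [hudef, hadef]
      simp only
      rw [pow_succ, Nat.factorial_succ]
      have hfn : ((n ! : ℕ) : ℝ) ≠ 0 := by positivity
      have hn1 : ((n + 1 : ℕ) : ℝ) ≠ 0 := by positivity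
      push_cast
      field_simp
    have hu_shift_sum : Summable (fun n => u (n + 1)) :=
      (ha_sum.mul_left L).congr fun n => (hu1 n).symm
    have hu_sum : Summable u := (summable_nat_add_iff 1).1 hu_shift_sum
    have hu_tsum : ∑' m, u m = L * Real.exp L := by
      rw [Summable.tsum_eq_zero_add hu_sum]
      have h0 : u 0 = 0 := by simp [hudef]
      rw [h0, zero_add]
      calc ∑' n, u (n + 1) = ∑' n, L * a n := tsum_congr hu1
        _ = L * Real.exp L := by rw [tsum_mul_left, ha_tsum]
    have hterm : ∀ m : ℕ, (m : ℝ) * w m ≤ u m := by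
      intro m
      rw [hudef]
      match m, (by omega : m = 0 ∨ m = 1 ∨ 2 ≤ m) with
      | _, Or.inl rfl => simp
      | _, Or.inr (Or.inl rfl) => rw [hw1]; simp [ha_nonneg 1]
      | m, Or.inr (Or.inr hm) =>
        rw [hw_eq m hm]
        apply mul_le_mul_of_nonneg_left _ (by positivity : (0:ℝ) ≤ (m:ℝ))
        calc c m * a m ≤ 1 * a m := mul_le_mul_of_nonneg_right (hc_le_one m) (ha_nonneg m)
          _ = a m := one_mul _
    have hterm_nonneg : ∀ m : ℕ, 0 ≤ (m : ℝ) * w m := fun m =>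
      mul_nonneg (by positivity) (hw_nonneg m)
    have hmw_sum : Summable (fun m : ℕ => (m : ℝ) * w m) :=
      hu_sum.of_nonneg_of_le hterm_nonneg hterm
    have hE_le : ∑' m : ℕ, (m : ℝ) * w m ≤ L * Real.exp L := by
      rw [← hu_tsum]
      exact Summable.tsum_le_tsum hterm hmw_sum hu_sum
    have hE_nonneg : 0 ≤ ∑' m : ℕ, (m : ℝ) * w m := tsum_nonneg hterm_nonneg
    have hdiv : (∑' m : ℕ, (m : ℝ) * w m) / W ≤ ∑' m : ℕ, (m : ℝ) * w m :=
      div_le_self hE_nonneg (by linarith)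
    have hfinal : L * Real.exp L ≤ L + Real.exp L * L ^ 2 := by
      have h := Real.add_one_le_exp (-L)
      have hinv : Real.exp (-L) * Real.exp L = 1 := by rw [← Real.exp_add]; simp
      have hEp : 0 < Real.exp L := Real.exp_pos L
      nlinarith [mul_le_mul_of_nonneg_right h hEp.le,
        mul_le_mul_of_nonneg_left (mul_le_mul_of_nonneg_right h hEp.le) hL0]
    calc (∑' m : ℕ, (m : ℝ) * w m) / W ≤ ∑' m : ℕ, (m : ℝ) * w m := hdiv
      _ ≤ L * Real.exp L := hE_le
      _ ≤ L + Real.exp L * L ^ 2 := hfinal
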